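/- Covariance of SSC position observables under Poincaré transformations: Let Λ : ℝ⁴ → ℝ⁴ be linear with η(Λx, Λy) = η(x,y) for all x,y and mapping future-directed timelike vectors to future-directed timelike vectors, and let a ∈ ℝ⁴. Let P be future-directed timelike, J_{μν} antisymmetric, f future-directed timelike, u future-directed unit timelike, and τ ∈ ℝ. Define the transformed data P' := ΛP, J'_{μν} := J_{ρσ}(Λ⁻¹)^ρ{}_μ(Λ⁻¹)^σ{}_ν + a_μ P_ρ(Λ⁻¹)^ρ{}_ν − a_ν P_ρ(Λ⁻¹)^ρ{}_μ, f' := Λf, u' := Λu, τ' := τ − η(Λu, a). Then the SSC position computed from (P', J', f') on the hyperplane (u', τ') equals the Poincaré transform of the original: χ'(u', τ') = Λ·χ(u,τ) + a. -/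

import Mathlib

set_option maxHeartbeats 1000000


noncomputable section

open scoped BigOperators

/-- The Minkowski bilinear form on `ℝ⁴`, signature `(-+++)`. -/
def mink (x y : Fin 4 → ℝ) : ℝ := -(x 0 * y 0) + x 1 * y 1 + x 2 * y 2 + x 3 * y 3

/-- Lowering (equivalently raising) an index with `η = diag(-1,1,1,1)`. -/
def low (v : Fin 4 → ℝ) : Fin 4 → ℝ := fun μ => if μ = 0 then -(v μ) else v μ

/-- `v` is future-directed timelike. -/
def FDTimelike (v : Fin 4 → ℝ) : Prop := mink v v < 0 ∧ 0 < v 0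

/-- `v` is future-directed unit timelike. -/
def FDUnitTimelike (v : Fin 4 → ℝ) : Prop := mink v v = -1 ∧ 0 < v 0

/-- `mc := √(−η(P,P))`. -/
def mcOf (P : Fin 4 → ℝ) : ℝ := Real.sqrt (-(mink P P))

/-- The spin tensor `S_{μν}(x) = J_{μν} − x_μ P_ν + x_ν P_μ` about the point `x`. -/
def spinTensor (J : Fin 4 → Fin 4 → ℝ) (P x : Fin 4 → ℝ) : Fin 4 → Fin 4 → ℝ :=
  fun μ ν => J μ ν - low x μ * low P ν + low x ν * low P μ

/-- The spin supplementary condition `S_{μν}(x) f^ν = 0` with respect to `f`. -/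
def SSC (J : Fin 4 → Fin 4 → ℝ) (P x f : Fin 4 → ℝ) : Prop :=
  ∀ μ, ∑ ν, spinTensor J P x μ ν * f ν = 0

/-- Lowered components of the Newton–Wigner position observable. -/
def nwLow (J : Fin 4 → Fin 4 → ℝ) (P u : Fin 4 → ℝ) (τ : ℝ) : Fin 4 → ℝ :=
  fun μ =>
    -(∑ ρ, J μ ρ * (u ρ + P ρ / mcOf P)) / (mcOf P - mink u P)
    + τ * low P μ / (-(mink u P))
    - ((∑ l, ∑ ρ, J l ρ * u l * P ρ) / (mcOf P * (mcOf P - mink u P)))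
        * low P μ / (-(mink u P))

/-- The Newton–Wigner position observable (as a point of `ℝ⁴`). -/
def nw (J : Fin 4 → Fin 4 → ℝ) (P u : Fin 4 → ℝ) (τ : ℝ) : Fin 4 → ℝ :=
  low (nwLow J P u τ)

/-- Lowered components of the SSC position observable on the spacelike hyperplane with unit
normal `u` and distance `τ`:
`χ_μ(u,τ) = J_{μρ}f^ρ/(f·P) + τP_μ/(−u·P) − [J_{λρ}u^λf^ρ/(−f·P)]·P_μ/(−u·P)`. -/
def sscPosLow (J : Fin 4 → Fin 4 → ℝ) (P f u : Fin 4 → ℝ) (τ : ℝ) : Fin 4 → ℝ :=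
  fun μ =>
    (∑ ρ, J μ ρ * f ρ) / mink f P
    + τ * low P μ / (-(mink u P))
    - ((∑ l, ∑ ρ, J l ρ * u l * f ρ) / (-(mink f P))) * (low P μ / (-(mink u P)))

/-- The SSC position observable (as a point of `ℝ⁴`). -/
def sscPos (J : Fin 4 → Fin 4 → ℝ) (P f u : Fin 4 → ℝ) (τ : ℝ) : Fin 4 → ℝ :=
  low (sscPosLow J P f u τ)

/-- **Covariance of SSC position observables under Poincaré transformations**: for a Lorentz
transformation `Λ` (preserving `η` and future-directed timelike vectors) and a translation `a`,
the SSC position computed from the transformed data `(P', J', f')` on the transformed hyperplane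
`(u', τ')` equals `Λ·χ(u,τ) + a`. -/
lemma mink_comm' (x y : Fin 4 → ℝ) : mink x y = mink y x := by simp [mink]; ring

lemma mink_eq_sum' (x y : Fin 4 → ℝ) : mink x y = ∑ i, low x i * y i := by
  simp [mink, low, Fin.sum_univ_four]

lemma mink_neg' (f P : Fin 4 → ℝ) (hf : FDTimelike f) (hP : FDTimelike P) : mink f P < 0 := by
  obtain ⟨hf1, hf0⟩ := hf
  obtain ⟨hP1, hP0⟩ := hP
  simp [mink] at *
  nlinarith [sq_nonneg (f 1 * P 2 - f 2 * P 1), sq_nonneg (f 1 * P 3 - f 3 * P 1),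
    sq_nonneg (f 2 * P 3 - f 3 * P 2), mul_pos hf0 hP0,
    sq_nonneg (f 0 * P 0 - (f 1 * P 1 + f 2 * P 2 + f 3 * P 3)),
    sq_nonneg (f 0 * P 0 + (f 1 * P 1 + f 2 * P 2 + f 3 * P 3))]

theorem sscPos_poincare_covariant
    (Λ : Matrix (Fin 4) (Fin 4) ℝ)
    (hΛη : ∀ x y : Fin 4 → ℝ, mink (Λ.mulVec x) (Λ.mulVec y) = mink x y)
    (hΛfd : ∀ x : Fin 4 → ℝ, FDTimelike x → FDTimelike (Λ.mulVec x))
    (a : Fin 4 → ℝ)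
    (P : Fin 4 → ℝ) (hP : FDTimelike P)
    (J : Fin 4 → Fin 4 → ℝ) (hJ : ∀ μ ν, J μ ν = -J ν μ)
    (f : Fin 4 → ℝ) (hf : FDTimelike f)
    (u : Fin 4 → ℝ) (hu : FDUnitTimelike u) (τ : ℝ) :
    sscPos
      (fun μ ν => (∑ ρ, ∑ s, J ρ s * Λ⁻¹ ρ μ * Λ⁻¹ s ν)
        + low a μ * (∑ ρ, low P ρ * Λ⁻¹ ρ ν) - low a ν * (∑ ρ, low P ρ * Λ⁻¹ ρ μ))
      (Λ.mulVec P) (Λ.mulVec f) (Λ.mulVec u) (τ - mink (Λ.mulVec u) a)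
    = Λ.mulVec (sscPos J P f u τ) + a := by
  classical
  -- nonzero denominators
  have huT : FDTimelike u := ⟨by rw [hu.1]; norm_num, hu.2⟩
  have hDf : mink f P ≠ 0 := (mink_neg' f P hf hP).ne
  have hDu : mink u P ≠ 0 := (mink_neg' u P huT hP).ne
  -- the explicit inverse B = η Λᵀ η
  set s : Fin 4 → ℝ := fun i => if i = 0 then -1 else 1 with hs
  set B : Matrix (Fin 4) (Fin 4) ℝ := Matrix.of (fun ρ μ => s ρ * s μ * Λ μ ρ) with hBdef
  have hentry : ∀ i j : Fin 4,
      mink (fun k => Λ k i) (fun k => Λ k j) = mink (Pi.single i 1) (Pi.single j 1) := by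
    intro i j
    have h := hΛη (Pi.single i 1) (Pi.single j 1)
    simp [Matrix.mulVec_single] at h
    exact h
  have hBΛ : B * Λ = 1 := by
    ext i j
    have h := hentry i j
    fin_cases i <;> fin_cases j <;>
      simp [Matrix.mul_apply, Fin.sum_univ_four, hBdef, hs, mink, Pi.single_apply,
        Matrix.one_apply] at h ⊢ <;> linarith
  have hinv : Λ⁻¹ = B := Matrix.inv_eq_left_inv hBΛ
  -- key contraction identities
  have key_col : ∀ (x : Fin 4 → ℝ) (β : Fin 4), (∑ ρ, B β ρ * (Λ.mulVec x) ρ) = x β := by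
    intro x β
    have h : (B * Λ).mulVec x = x := by rw [hBΛ, Matrix.one_mulVec]
    have h2 := congrFun h β
    rw [← Matrix.mulVec_mulVec] at h2
    simpa [Matrix.mulVec, dotProduct] using h2
  have kf : ∀ α, (∑ l, B α l * (Λ.mulVec f) l) = f α := key_col f
  have ku : ∀ α, (∑ l, B α l * (Λ.mulVec u) l) = u α := key_col u
  -- lowered transformed P
  have hD : ∀ μ, low (Λ.mulVec P) μ = ∑ ν, low P ν * B ν μ := by
    intro μ
    fin_cases μ <;>
      simp [low, hBdef, hs, Matrix.mulVec, dotProduct, Fin.sum_univ_four] <;> ring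
  have hPf : mink f P = ∑ ρ, (∑ γ, low P γ * B γ ρ) * (Λ.mulVec f) ρ := by
    calc mink f P = mink (Λ.mulVec P) (Λ.mulVec f) := by rw [hΛη P f, mink_comm']
    _ = ∑ ρ, low (Λ.mulVec P) ρ * (Λ.mulVec f) ρ := mink_eq_sum' _ _
    _ = ∑ ρ, (∑ γ, low P γ * B γ ρ) * (Λ.mulVec f) ρ :=
        Finset.sum_congr rfl fun ρ _ => by rw [hD ρ]
  have hPu : mink u P = ∑ l, (∑ γ, low P γ * B γ l) * (Λ.mulVec u) l := by
    calc mink u P = mink (Λ.mulVec P) (Λ.mulVec u) := by rw [hΛη P u, mink_comm']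
    _ = ∑ l, low (Λ.mulVec P) l * (Λ.mulVec u) l := mink_eq_sum' _ _
    _ = ∑ l, (∑ γ, low P γ * B γ l) * (Λ.mulVec u) l :=
        Finset.sum_congr rfl fun l _ => by rw [hD l]
  have hUa : mink (Λ.mulVec u) a = ∑ l, low a l * (Λ.mulVec u) l := by
    rw [mink_comm', mink_eq_sum']
  -- numerator identities
  have hA : ∀ μ, (∑ ρ, ((∑ α, ∑ β, J α β * B α μ * B β ρ)
        + low a μ * (∑ γ, low P γ * B γ ρ) - low a ρ * (∑ γ, low P γ * B γ μ))
          * (Λ.mulVec f) ρ)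
      = (∑ ν, (∑ σ, J ν σ * f σ) * B ν μ) + low a μ * mink f P
        - (∑ ρ, low a ρ * (Λ.mulVec f) ρ) * (∑ γ, low P γ * B γ μ) := by
    intro μ
    rw [hPf]
    simp only [← kf]
    simp only [Fin.sum_univ_four]
    ring
  have hE : (∑ l, ∑ ρ, ((∑ α, ∑ β, J α β * B α l * B β ρ)
        + low a l * (∑ γ, low P γ * B γ ρ) - low a ρ * (∑ γ, low P γ * B γ l))
          * (Λ.mulVec u) l * (Λ.mulVec f) ρ)
      = (∑ l, ∑ ρ, J l ρ * u l * f ρ) + mink (Λ.mulVec u) a * mink f P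
        - (∑ ρ, low a ρ * (Λ.mulVec f) ρ) * mink u P := by
    rw [hUa, hPf, hPu]
    simp only [← ku, ← kf]
    simp only [Fin.sum_univ_four]
    ring
  -- main component identity for the lowered observables
  have main : ∀ μ, sscPosLow
      (fun μ ν => (∑ ρ, ∑ s, J ρ s * B ρ μ * B s ν)
        + low a μ * (∑ ρ, low P ρ * B ρ ν) - low a ν * (∑ ρ, low P ρ * B ρ μ))
      (Λ.mulVec P) (Λ.mulVec f) (Λ.mulVec u) (τ - mink (Λ.mulVec u) a) μ
      = (∑ ν, B ν μ * sscPosLow J P f u τ ν) + low a μ := by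
    intro μ
    simp only [sscPosLow]
    rw [hΛη f P, hΛη u P, hA μ, hE, hD μ]
    simp only [Fin.sum_univ_four, div_neg, neg_div, neg_neg]
    field_simp
    ring
  -- conclude
  have low_apply : ∀ (v : Fin 4 → ℝ) (μ : Fin 4), low v μ = if μ = 0 then -(v μ) else v μ :=
    fun v μ => rfl
  funext μ
  simp only [hinv, sscPos, Pi.add_apply]
  have hmv : (Λ.mulVec (low (sscPosLow J P f u τ))) μ
      = Λ μ 0 * low (sscPosLow J P f u τ) 0 + Λ μ 1 * low (sscPosLow J P f u τ) 1
        + Λ μ 2 * low (sscPosLow J P f u τ) 2 + Λ μ 3 * low (sscPosLow J P f u τ) 3 := by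
    simp [Matrix.mulVec, dotProduct, Fin.sum_univ_four]
  rw [hmv, low_apply, main μ]
  fin_cases μ <;>
    simp (config := { decide := true }) [low_apply, Fin.sum_univ_four, hBdef, hs,
      Matrix.of_apply] <;>
    ring
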